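/- The coefficient Λ(Y|X) satisfies Λ(Y|X) = 4 α(X)⁻¹ ∫_{ℝ^p×ℝ^p} ( Ψ(κ(x₁), κ(x₂)) − 1/2 )² d(μ_X ⊗ μ_X)(x₁, x₂) = 4 α(X)⁻¹ ( ∫_{ℝ^p×ℝ^p} Ψ(κ(x₁), κ(x₂))² d(μ_X ⊗ μ_X)(x₁, x₂) − 1/4 ), and 0 ≤ Λ(Y|X) ≤ 1. -/

import Mathlib

open MeasureTheory ProbabilityTheory Set Filter Topology
open scoped ENNReal

/-- The (nonparametric) relative effect `Ψ(μ, ν) = ∫ μ((-∞,y)) + (1/2) μ({y}) dν(y)`. -/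
noncomputable def relEffect (μ ν : Measure ℝ) : ℝ :=
  ∫ y, ((μ (Set.Iio y)).toReal + (1 / 2) * (μ {y}).toReal) ∂ν

namespace SepAux

/-- ENNReal version of the relative effect. -/
noncomputable def psiL (μ ν : Measure ℝ) : ℝ≥0∞ :=
  ∫⁻ y, (μ (Set.Iio y) + 2⁻¹ * μ {y}) ∂ν

lemma measurable_Iio_meas (μ : Measure ℝ) [SFinite μ] :
    Measurable fun y => μ (Set.Iio y) := by
  have h := measurable_measure_prodMk_left (ν := μ)
      (s := {p : ℝ × ℝ | p.2 < p.1}) (measurableSet_lt measurable_snd measurable_fst)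
  exact h

lemma measurable_singleton_meas (μ : Measure ℝ) [SFinite μ] :
    Measurable fun y => μ {y} := by
  have h := measurable_measure_prodMk_left (ν := μ)
      (s := {p : ℝ × ℝ | p.2 = p.1}) (measurableSet_eq_fun measurable_snd measurable_fst)
  exact h

lemma measurable_F (μ : Measure ℝ) [SFinite μ] :
    Measurable fun y => μ (Set.Iio y) + 2⁻¹ * μ {y} :=
  (measurable_Iio_meas μ).add ((measurable_singleton_meas μ).const_mul _)

lemma relEffect_eq_toReal (μ ν : Measure ℝ) [IsFiniteMeasure μ] [SFinite μ] :
    relEffect μ ν = (psiL μ ν).toReal := by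
  rw [relEffect, psiL, ← integral_toReal ((measurable_F μ).aemeasurable)
    (ae_of_all _ fun y => ENNReal.add_lt_top.2
      ⟨measure_lt_top μ _, ENNReal.mul_lt_top (by simp) (measure_lt_top μ _)⟩)]
  congr 1
  ext y
  rw [ENNReal.toReal_add (measure_ne_top μ _)
    (ENNReal.mul_ne_top (by simp) (measure_ne_top μ _)), ENNReal.toReal_mul]
  norm_num

/-- The double integrand. -/
noncomputable def F : ℝ × ℝ → ℝ≥0∞ := fun p =>
  {q : ℝ × ℝ | q.2 < q.1}.indicator 1 p + 2⁻¹ * {q : ℝ × ℝ | q.2 = q.1}.indicator 1 p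

lemma measurable_FF : Measurable F :=
  ((measurable_one.indicator (measurableSet_lt measurable_snd measurable_fst)).add
    ((measurable_one.indicator (measurableSet_eq_fun measurable_snd measurable_fst)).const_mul _))

lemma lintegral_F (μ ν : Measure ℝ) [SFinite μ] [SFinite ν] :
    ∫⁻ p, F p ∂(ν.prod μ) = psiL μ ν := by
  rw [lintegral_prod _ measurable_FF.aemeasurable, psiL]
  refine lintegral_congr fun y => ?_
  have h1 : ∀ x : ℝ, F (y, x) = (Set.Iio y).indicator 1 x
      + 2⁻¹ * ({y} : Set ℝ).indicator 1 x := by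
    intro x
    simp only [F, Set.indicator_apply, Set.mem_setOf_eq, Set.mem_Iio, Set.mem_singleton_iff,
      Pi.one_apply]
  simp_rw [h1]
  rw [lintegral_add_left (measurable_one.indicator measurableSet_Iio),
    lintegral_const_mul _ (measurable_one.indicator (measurableSet_singleton y)),
    lintegral_indicator_one measurableSet_Iio,
    lintegral_indicator_one (measurableSet_singleton y)]

lemma psiL_add (μ ν : Measure ℝ) [IsProbabilityMeasure μ] [IsProbabilityMeasure ν] :
    psiL μ ν + psiL ν μ = 1 := by
  rw [← lintegral_F μ ν, ← lintegral_F ν μ]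
  have hswap : ∫⁻ p, F p ∂(μ.prod ν) = ∫⁻ p, F (Prod.swap p) ∂(ν.prod μ) := by
    rw [← Measure.prod_swap, lintegral_map measurable_FF measurable_swap]
  rw [hswap, ← lintegral_add_left measurable_FF]
  have h1 : ∀ p : ℝ × ℝ, F p + F (Prod.swap p) = 1 := by
    rintro ⟨y, x⟩
    simp only [F, Set.indicator_apply, Set.mem_setOf_eq, Prod.swap_prod_mk, Pi.one_apply]
    rcases lt_trichotomy x y with h | h | h
    · simp [h, h.ne, h.ne', not_lt.2 h.le]
    · simp only [h, lt_irrefl, if_false, if_true, mul_one]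
      simp [ENNReal.inv_two_add_inv_two]
    · simp [h, h.ne, h.ne', not_lt.2 h.le]
  rw [lintegral_congr h1, lintegral_one, measure_univ]

lemma psiL_ne_top (μ ν : Measure ℝ) [IsProbabilityMeasure μ] [IsProbabilityMeasure ν] :
    psiL μ ν ≠ ⊤ := by
  have h : psiL μ ν ≤ 1 := by
    rw [← psiL_add μ ν]; exact le_self_add
  exact (lt_of_le_of_lt h ENNReal.one_lt_top).ne

lemma relEffect_nonneg (μ ν : Measure ℝ) : 0 ≤ relEffect μ ν :=
  integral_nonneg fun y => by positivity

lemma relEffect_add (μ ν : Measure ℝ) [IsProbabilityMeasure μ] [IsProbabilityMeasure ν] :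
    relEffect μ ν + relEffect ν μ = 1 := by
  rw [relEffect_eq_toReal, relEffect_eq_toReal,
    ← ENNReal.toReal_add (psiL_ne_top μ ν) (psiL_ne_top ν μ), psiL_add]
  simp

section Kernel

variable {E : Type*} [MeasurableSpace E]

lemma measurable_kernel_Iio (κ : Kernel E ℝ) [IsSFiniteKernel κ] :
    Measurable fun q : E × ℝ => κ q.1 (Set.Iio q.2) := by
  have h := Kernel.measurable_kernel_prodMk_left
      (κ := κ.comap (Prod.fst : E × ℝ → E) measurable_fst)
      (t := {p : (E × ℝ) × ℝ | p.2 < p.1.2})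
      (measurableSet_lt measurable_snd measurable_fst.snd)
  simp_rw [Kernel.comap_apply] at h
  exact h

lemma measurable_kernel_singleton (κ : Kernel E ℝ) [IsSFiniteKernel κ] :
    Measurable fun q : E × ℝ => κ q.1 ({q.2} : Set ℝ) := by
  have h := Kernel.measurable_kernel_prodMk_left
      (κ := κ.comap (Prod.fst : E × ℝ → E) measurable_fst)
      (t := {p : (E × ℝ) × ℝ | p.2 = p.1.2})
      (measurableSet_eq_fun measurable_snd measurable_fst.snd)
  simp_rw [Kernel.comap_apply] at h
  exact h

lemma measurable_psiL (κ : Kernel E ℝ) [IsSFiniteKernel κ] :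
    Measurable fun x : E × E => psiL (κ x.1) (κ x.2) := by
  have hf : Measurable (Function.uncurry fun (x : E × E) (y : ℝ) =>
      κ x.1 (Set.Iio y) + 2⁻¹ * κ x.1 ({y} : Set ℝ)) := by
    have h1 : Measurable fun q : (E × E) × ℝ => κ q.1.1 (Set.Iio q.2) :=
      (measurable_kernel_Iio κ).comp (measurable_fst.fst.prodMk measurable_snd)
    have h2 : Measurable fun q : (E × E) × ℝ => κ q.1.1 ({q.2} : Set ℝ) :=
      (measurable_kernel_singleton κ).comp (measurable_fst.fst.prodMk measurable_snd)
    exact h1.add (h2.const_mul _)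
  have h := Measurable.lintegral_kernel_prod_right
      (κ := κ.comap (Prod.snd : E × E → E) measurable_snd) hf
  simp_rw [Kernel.comap_apply] at h
  exact h

end Kernel

/-- The relative-effect function of a kernel, as a function on pairs. -/
noncomputable def gfun {E : Type*} [MeasurableSpace E] (κ : Kernel E ℝ) : E × E → ℝ :=
  fun x => relEffect (κ x.1) (κ x.2)

lemma measurable_gfun {E : Type*} [MeasurableSpace E] (κ : Kernel E ℝ) [IsMarkovKernel κ] :
    Measurable (gfun κ) := by
  have h := (measurable_psiL κ).ennreal_toReal
  have he : gfun κ = fun x => (psiL (κ x.1) (κ x.2)).toReal := by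
    funext x; exact relEffect_eq_toReal _ _
  rw [he]; exact h

lemma integrable_of_bounded {α : Type*} [MeasurableSpace α] (μ : Measure α)
    [IsFiniteMeasure μ] {f : α → ℝ} (hf : Measurable f) (C : ℝ) (h : ∀ x, |f x| ≤ C) :
    Integrable f μ :=
  ⟨hf.aestronglyMeasurable,
    HasFiniteIntegral.of_bounded (C := C) (ae_of_all _ (by simpa [Real.norm_eq_abs] using h))⟩

end SepAux

/-- `α(μ) = 1 - ∫ μ({x}) dμ(x) = 1 - P(X = X*)`, the non-discrete mass of `μ`. -/
noncomputable def alphaCoeff {E : Type*} [MeasurableSpace E] (μ : Measure E) : ℝ :=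
  1 - ∫ x, (μ {x}).toReal ∂μ

/-- The coefficient of separation `Λ(Y|X)`. -/
noncomputable def sepCoeff {Ω E : Type*} [MeasurableSpace Ω] [MeasurableSpace E]
    (P : Measure Ω) [IsFiniteMeasure P] (Y : Ω → ℝ) (X : Ω → E) : ℝ :=
  (alphaCoeff (P.map X))⁻¹ *
    ∫ x : E × E,
      (relEffect (condDistrib Y X P x.1) (condDistrib Y X P x.2)
        - relEffect (condDistrib Y X P x.2) (condDistrib Y X P x.1)) ^ 2
      ∂((P.map X).prod (P.map X))

/-- A random variable is non-degenerate if it is not a.s. constant. -/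
def Nondegenerate {Ω α : Type*} [MeasurableSpace Ω] (P : Measure Ω) (Z : Ω → α) : Prop :=
  ¬ ∃ c, ∀ᵐ ω ∂P, Z ω = c

/-- Theorem (alternative representations and range of `Λ`). -/
theorem sepCoeff_eq_and_mem_Icc
    {Ω : Type*} [MeasurableSpace Ω] {p : ℕ} (hp : 1 ≤ p)
    (P : Measure Ω) [IsProbabilityMeasure P]
    (X : Ω → (Fin p → ℝ)) (Y : Ω → ℝ)
    (hX : Measurable X) (hY : Measurable Y)
    (hXnd : ∃ k, Nondegenerate P fun ω => X ω k)
    (hYnd : Nondegenerate P Y) :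
    sepCoeff P Y X
      = 4 * (alphaCoeff (P.map X))⁻¹ *
          ∫ x : (Fin p → ℝ) × (Fin p → ℝ),
            (relEffect (condDistrib Y X P x.1) (condDistrib Y X P x.2) - 1 / 2) ^ 2
            ∂((P.map X).prod (P.map X))
    ∧ sepCoeff P Y X
      = 4 * (alphaCoeff (P.map X))⁻¹ *
          ((∫ x : (Fin p → ℝ) × (Fin p → ℝ),
            relEffect (condDistrib Y X P x.1) (condDistrib Y X P x.2) ^ 2
            ∂((P.map X).prod (P.map X))) - 1 / 4)
    ∧ 0 ≤ sepCoeff P Y X ∧ sepCoeff P Y X ≤ 1 := by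
  classical
  have hPm : IsProbabilityMeasure (P.map X) := Measure.isProbabilityMeasure_map hX.aemeasurable
  set m : Measure (Fin p → ℝ) := P.map X with hm
  set κ : Kernel (Fin p → ℝ) ℝ := condDistrib Y X P with hκ
  haveI : IsMarkovKernel κ := by rw [hκ]; infer_instance
  haveI : IsProbabilityMeasure m := hPm
  set G : (Fin p → ℝ) × (Fin p → ℝ) → ℝ := SepAux.gfun κ with hG
  have hGapp : ∀ a b : Fin p → ℝ, relEffect (κ a) (κ b) = G (a, b) := fun a b => by
    rw [hG]; rfl
  have hGmeas : Measurable G := by rw [hG]; exact SepAux.measurable_gfun κ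
  have hGswap : Measurable fun x : (Fin p → ℝ) × (Fin p → ℝ) => G (x.2, x.1) :=
    hGmeas.comp measurable_swap
  have hsum : ∀ x : (Fin p → ℝ) × (Fin p → ℝ), G x + G (x.2, x.1) = 1 := fun x => by
    rw [hG]; exact SepAux.relEffect_add _ _
  have hG0 : ∀ x : (Fin p → ℝ) × (Fin p → ℝ), 0 ≤ G x := fun x => by
    rw [hG]; exact SepAux.relEffect_nonneg _ _
  have hG1 : ∀ x : (Fin p → ℝ) × (Fin p → ℝ), G x ≤ 1 := fun x => by
    have h1 := hsum x; have h2 := hG0 (x.2, x.1); linarith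
  set Pi2 : Measure ((Fin p → ℝ) × (Fin p → ℝ)) := m.prod m with hPi2
  haveI : IsProbabilityMeasure Pi2 := by rw [hPi2]; infer_instance
  -- integrability facts
  have intG : Integrable G Pi2 :=
    SepAux.integrable_of_bounded Pi2 hGmeas 1 fun x => abs_le.2 ⟨by linarith [hG0 x], hG1 x⟩
  have intGswap : Integrable (fun x : (Fin p → ℝ) × (Fin p → ℝ) => G (x.2, x.1)) Pi2 :=
    SepAux.integrable_of_bounded Pi2 hGswap 1 fun x =>
      abs_le.2 ⟨by linarith [hG0 (x.2, x.1)], hG1 (x.2, x.1)⟩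
  have intsq : Integrable (fun x : (Fin p → ℝ) × (Fin p → ℝ) => (G x - G (x.2, x.1)) ^ 2) Pi2 :=
    SepAux.integrable_of_bounded Pi2 ((hGmeas.sub hGswap).pow_const 2) 1 fun x => by
      rw [abs_of_nonneg (sq_nonneg _)]
      nlinarith [hG0 x, hG1 x, hG0 (x.2, x.1), hG1 (x.2, x.1)]
  have intsq2 : Integrable (fun x : (Fin p → ℝ) × (Fin p → ℝ) => (G x - 1 / 2) ^ 2) Pi2 :=
    SepAux.integrable_of_bounded Pi2 ((hGmeas.sub measurable_const).pow_const 2) 1 fun x => by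
      rw [abs_of_nonneg (sq_nonneg _)]
      nlinarith [hG0 x, hG1 x]
  have intG2 : Integrable (fun x : (Fin p → ℝ) × (Fin p → ℝ) => G x ^ 2) Pi2 :=
    SepAux.integrable_of_bounded Pi2 (hGmeas.pow_const 2) 1 fun x => by
      rw [abs_of_nonneg (sq_nonneg _)]
      nlinarith [hG0 x, hG1 x]
  -- sepCoeff in terms of G
  have hsep : sepCoeff P Y X = (alphaCoeff m)⁻¹ * ∫ x, (G x - G (x.2, x.1)) ^ 2 ∂Pi2 := rfl
  -- the integral of G is 1/2
  have hswap_int : ∫ x, G (x.2, x.1) ∂Pi2 = ∫ x, G x ∂Pi2 := by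
    have h1 : ∫ x, G (Prod.swap x) ∂Pi2 = ∫ y, G y ∂(Pi2.map Prod.swap) :=
      (integral_map measurable_swap.aemeasurable hGmeas.aestronglyMeasurable).symm
    have h2 : Pi2.map Prod.swap = Pi2 := by rw [hPi2, Measure.prod_swap]
    calc ∫ x, G (x.2, x.1) ∂Pi2 = ∫ x, G (Prod.swap x) ∂Pi2 := rfl
      _ = ∫ y, G y ∂(Pi2.map Prod.swap) := h1
      _ = ∫ x, G x ∂Pi2 := by rw [h2]
  have hint1 : ∫ x, G x ∂Pi2 = 1 / 2 := by
    have h := integral_add intG intGswap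
    have hone : ∫ x, (G x + G (x.2, x.1)) ∂Pi2 = 1 := by
      rw [integral_congr_ae (ae_of_all _ hsum)]
      simp
    rw [h, hswap_int] at hone
    linarith
  -- diagonal and alphaCoeff facts
  have hdiag : MeasurableSet (Set.diagonal (Fin p → ℝ)) := isClosed_diagonal.measurableSet
  have hpre : ∀ x : Fin p → ℝ, (Prod.mk x ⁻¹' Set.diagonal (Fin p → ℝ)) = {x} := by
    intro x; ext y
    simp [Set.mem_diagonal_iff, eq_comm]
  have hatom_meas : Measurable fun x : Fin p → ℝ => m {x} := by
    have h := measurable_measure_prodMk_left (ν := m) hdiag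
    simp_rw [hpre] at h
    exact h
  have hα : alphaCoeff m = 1 - (Pi2 (Set.diagonal (Fin p → ℝ))).toReal := by
    rw [alphaCoeff]
    congr 1
    rw [hPi2, Measure.prod_apply hdiag]
    simp_rw [hpre]
    rw [integral_toReal hatom_meas.aemeasurable (ae_of_all _ fun x => measure_lt_top m {x})]
  have hDle : (Pi2 (Set.diagonal (Fin p → ℝ))).toReal ≤ 1 := by
    simpa using ENNReal.toReal_mono ENNReal.one_ne_top prob_le_one
  have hα0 : 0 ≤ alphaCoeff m := by rw [hα]; linarith
  -- the key integral bound
  have hind : Integrable ((Set.diagonal (Fin p → ℝ))ᶜ.indicator (1 : (Fin p → ℝ) × (Fin p → ℝ) → ℝ)) Pi2 :=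
    (integrable_const 1).indicator hdiag.compl
  have hptle : ∀ x : (Fin p → ℝ) × (Fin p → ℝ),
      (G x - G (x.2, x.1)) ^ 2 ≤ (Set.diagonal (Fin p → ℝ))ᶜ.indicator (1 : (Fin p → ℝ) × (Fin p → ℝ) → ℝ) x := by
    rintro ⟨a, b⟩
    by_cases hx : (a, b) ∈ Set.diagonal (Fin p → ℝ)
    · have hx' : a = b := hx
      subst hx'
      rw [Set.indicator_of_notMem (by simpa using hx)]
      simp
    · rw [Set.indicator_of_mem (Set.mem_compl hx)]
      have h1 := hsum (a, b)
      simp only [Pi.one_apply]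
      nlinarith [hG0 (a, b), hG1 (a, b), hG0 (b, a), hG1 (b, a)]
  have hIle : ∫ x, (G x - G (x.2, x.1)) ^ 2 ∂Pi2 ≤ alphaCoeff m := by
    have h := integral_mono intsq hind hptle
    rw [integral_indicator_one hdiag.compl] at h
    have h3 : Pi2 ((Set.diagonal (Fin p → ℝ))ᶜ) = 1 - Pi2 (Set.diagonal (Fin p → ℝ)) := by
      rw [measure_compl hdiag (measure_ne_top _ _), measure_univ]
    have h4 : ((1 : ℝ≥0∞) - Pi2 (Set.diagonal (Fin p → ℝ))).toReal
        = 1 - (Pi2 (Set.diagonal (Fin p → ℝ))).toReal := by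
      rw [ENNReal.toReal_sub_of_le prob_le_one ENNReal.one_ne_top]
      simp
    rw [measureReal_def, h3, h4] at h
    rw [hα]
    exact h
  have hInonneg : 0 ≤ ∫ x, (G x - G (x.2, x.1)) ^ 2 ∂Pi2 :=
    integral_nonneg fun x => sq_nonneg _
  -- the two rewriting identities
  have hI1 : ∫ x, (G x - G (x.2, x.1)) ^ 2 ∂Pi2 = 4 * ∫ x, (G x - 1 / 2) ^ 2 ∂Pi2 := by
    rw [← integral_const_mul]
    refine integral_congr_ae (ae_of_all _ fun x => ?_)
    show (G x - G (x.2, x.1)) ^ 2 = 4 * (G x - 1 / 2) ^ 2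
    have hb : G (x.2, x.1) = 1 - G x := by linarith [hsum x]
    rw [hb]; ring
  have hJ : ∫ x, (G x - 1 / 2) ^ 2 ∂Pi2 = (∫ x, G x ^ 2 ∂Pi2) - 1 / 4 := by
    have hpt : ∀ x : (Fin p → ℝ) × (Fin p → ℝ),
        (G x - 1 / 2) ^ 2 = (G x ^ 2 - G x) + 1 / 4 := fun x => by ring
    have int3 : Integrable (fun x : (Fin p → ℝ) × (Fin p → ℝ) => G x ^ 2 - G x) Pi2 :=
      intG2.sub intG
    rw [integral_congr_ae (ae_of_all _ hpt), integral_add int3 (integrable_const _),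
      integral_sub intG2 intG, hint1]
    simp
    ring
  have e1 : ∫ x, (relEffect (κ x.1) (κ x.2) - 1 / 2) ^ 2 ∂Pi2
      = ∫ x, (G x - 1 / 2) ^ 2 ∂Pi2 := by
    refine integral_congr_ae (ae_of_all _ fun x => ?_)
    show (relEffect (κ x.1) (κ x.2) - 1 / 2) ^ 2 = (G x - 1 / 2) ^ 2
    rw [hGapp x.1 x.2, Prod.mk.eta]
  have e2 : ∫ x, relEffect (κ x.1) (κ x.2) ^ 2 ∂Pi2 = ∫ x, G x ^ 2 ∂Pi2 := by
    refine integral_congr_ae (ae_of_all _ fun x => ?_)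
    show relEffect (κ x.1) (κ x.2) ^ 2 = G x ^ 2
    rw [hGapp x.1 x.2, Prod.mk.eta]
  refine ⟨?_, ?_, ?_, ?_⟩
  · rw [hsep, e1, hI1]; ring
  · rw [hsep, e2, hI1, hJ]; ring
  · rw [hsep]
    exact mul_nonneg (inv_nonneg.2 hα0) hInonneg
  · rw [hsep]
    rcases hα0.eq_or_lt with h0 | hpos
    · rw [← h0]; simp
    · calc (alphaCoeff m)⁻¹ * ∫ x, (G x - G (x.2, x.1)) ^ 2 ∂Pi2
          ≤ (alphaCoeff m)⁻¹ * alphaCoeff m :=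
            mul_le_mul_of_nonneg_left hIle (inv_nonneg.2 hα0)
        _ = 1 := inv_mul_cancel₀ hpos.ne'
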